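/- Let G be a finite group, k a positive integer, and A₁, …, A_k subsets of G such that G = A₁·…·A_k is a factorization. Then card(A₁) divides the order of the subgroup of G generated by the set A₁⁻¹A₁ = { g⁻¹ h : g, h ∈ A₁ }. -/

import Mathlib

open scoped Pointwise

/-- If `A₁·…·A_k` is a factorization of a finite group `G`, then `card A₁` divides
the order of the subgroup of `G` generated by `A₁⁻¹ A₁ = {g⁻¹ h | g, h ∈ A₁}`. -/
theorem stmt_6 {G : Type*} [Group G] [Fintype G] (k : ℕ) (hk : 0 < k) (A : Fin k → Set G)
    (hfac : Function.Bijective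
      (fun a : (∀ i : Fin k, A i) => (List.ofFn (fun i : Fin k => (a i : G))).prod)) :
    Nat.card (A ⟨0, hk⟩) ∣
      Nat.card (Subgroup.closure ((A ⟨0, hk⟩)⁻¹ * A ⟨0, hk⟩)) := by
  obtain ⟨n, rfl⟩ := Nat.exists_eq_succ_of_ne_zero hk.ne'
  set A₀ : Set G := A ⟨0, hk⟩ with hA₀
  set H := Subgroup.closure (A₀⁻¹ * A₀) with hHdef
  set P : (∀ i : Fin n, A i.succ) → G := fun t => (List.ofFn fun i => (t i : G)).prod with hP
  have surj : ∀ g : G, ∃ (x : A₀) (t : ∀ i : Fin n, A i.succ), g = (x : G) * P t := by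
    intro g
    obtain ⟨a, ha⟩ := hfac.surjective g
    refine ⟨a 0, fun i => a i.succ, ?_⟩
    rw [← ha]
    simp [P, List.ofFn_succ]
  have uniq : ∀ (x x' : A₀) (t t' : ∀ i : Fin n, A i.succ),
      (x : G) * P t = (x' : G) * P t' → x = x' := by
    intro x x' t t' h
    have heq := hfac.injective (a₁ := fun i => Fin.cases x t i)
      (a₂ := fun i => Fin.cases x' t' i) (by simp only [List.ofFn_succ, List.prod_cons]; exact h)
    exact congrFun heq 0
  have hmem : ∀ x y : A₀, (x : G)⁻¹ * (y : G) ∈ H :=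
    fun x y => Subgroup.subset_closure (Set.mul_mem_mul (Set.inv_mem_inv.mpr x.2) y.2)
  obtain ⟨a₀, t₀, -⟩ := surj 1
  set S : Set G := {b : G | (∃ t, b = P t) ∧ b ∈ H} with hS
  have hf : Function.Bijective (fun p : A₀ × S =>
      (⟨(a₀ : G)⁻¹ * p.1 * p.2, by
        exact mul_mem (hmem a₀ p.1) p.2.2.2⟩ : H)) := by
    constructor
    · rintro ⟨x, b⟩ ⟨x', b'⟩ hpq
      have h1 : (a₀ : G)⁻¹ * x * b = (a₀ : G)⁻¹ * x' * b' := congrArg Subtype.val hpq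
      have h2 : (x : G) * b = (x' : G) * b' := by
        have := congrArg (fun g => (a₀ : G) * g) h1
        simpa [mul_assoc] using this
      obtain ⟨⟨t, ht⟩, -⟩ := b.2
      obtain ⟨⟨t', ht'⟩, -⟩ := b'.2
      have hx : x = x' := uniq x x' t t' (by rw [← ht, ← ht']; exact h2)
      have hb : (b : G) = b' := by
        rw [hx] at h2
        exact mul_left_cancel h2
      exact Prod.ext hx (Subtype.ext hb)
    · rintro ⟨h, hh⟩
      obtain ⟨x, t, hxt⟩ := surj ((a₀ : G) * h)
      have hb : P t ∈ H := by
        have : P t = (x : G)⁻¹ * (a₀ : G) * h := by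
          rw [mul_assoc, hxt, ← mul_assoc, inv_mul_cancel, one_mul]
        rw [this]
        exact mul_mem (hmem x a₀) hh
      refine ⟨⟨x, ⟨P t, ⟨t, rfl⟩, hb⟩⟩, ?_⟩
      apply Subtype.ext
      show (a₀ : G)⁻¹ * x * P t = h
      rw [mul_assoc, ← hxt, ← mul_assoc, inv_mul_cancel, one_mul]
  have hcard : Nat.card H = Nat.card A₀ * Nat.card S := by
    rw [← Nat.card_congr (Equiv.ofBijective _ hf), Nat.card_prod]
  exact Dvd.intro _ hcard.symm
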